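/- arXiv:2605.18867 — 2 statements merged into one kernel-verified Lean document; each statement's English description precedes it below -/
import Mathlib

section
/- Let g = A·e_s + g_m in R^n with e_s a unit vector, g_m ⊥ e_s, z ~ N(0, I_n), ξ independent of z with mean 0, and ĝ = (⟨g, z⟩ + ξ)·z. Then for any unit vector v orthogonal to e_s, Var(⟨v, ĝ⟩) ≥ A². -/
open MeasureTheory ProbabilityTheory Real
open scoped ENNReal NNReal

noncomputable def stdGaussianPi (n : ℕ) : Measure (Fin n → ℝ) :=
  Measure.pi fun _ => gaussianReal 0 1

noncomputable def dot {n : ℕ} (x y : Fin n → ℝ) : ℝ := ∑ i, x i * y i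

namespace SGAux

noncomputable def gam : Measure ℝ := gaussianReal 0 1

instance : IsProbabilityMeasure gam := by
  rw [show gam = gaussianReal 0 1 from rfl]; infer_instance

lemma integrable_pow_gauss (k : ℕ) :
    Integrable (fun x : ℝ => x ^ k * Real.exp (-x^2/2)) := by
  have hC : ∀ x : ℝ, |x| ^ k ≤ (1 + 4^k * k.factorial) * Real.exp (x^2/4) := by
    intro x
    have hexp : (x^2/4)^k / k.factorial ≤ Real.exp (x^2/4) := by
      have h := Real.sum_le_exp_of_nonneg (by positivity : (0:ℝ) ≤ x^2/4) (k+1)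
      refine le_trans ?_ h
      exact Finset.single_le_sum (f := fun i => (x^2/4)^i / i.factorial)
        (fun i _ => by positivity) (Finset.self_mem_range_succ k)
    have h1 : Real.exp (x^2/4) ≥ 1 := Real.one_le_exp (by positivity)
    rcases le_total (|x|) 1 with h|h
    · calc |x|^k ≤ 1^k := pow_le_pow_left₀ (abs_nonneg x) h k
        _ = 1 := one_pow k
        _ ≤ (1 + 4^k * k.factorial) * 1 := by
            have : (0:ℝ) ≤ 4^k * k.factorial := by positivity
            nlinarith
        _ ≤ (1 + 4^k * k.factorial) * Real.exp (x^2/4) := by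
            have : (0:ℝ) < 1 + 4^k * k.factorial := by positivity
            nlinarith
    · have hx2 : |x|^k ≤ (x^2)^k := by
        calc |x|^k ≤ (|x|^2)^k := by
              apply pow_le_pow_left₀ (abs_nonneg x)
              nlinarith [abs_nonneg x]
          _ = (x^2)^k := by rw [sq_abs]
      have : (x^2)^k = 4^k * ((x^2/4)^k) := by rw [← mul_pow]; ring_nf
      have h2 : (x^2/4)^k ≤ k.factorial * Real.exp (x^2/4) := by
        rw [div_le_iff₀ (by positivity : (0:ℝ) < k.factorial)] at hexp
        linarith [hexp]
      calc |x|^k ≤ (x^2)^k := hx2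
        _ = 4^k * ((x^2/4)^k) := this
        _ ≤ 4^k * (k.factorial * Real.exp (x^2/4)) := by
            apply mul_le_mul_of_nonneg_left h2 (by positivity)
        _ ≤ (1 + 4^k * k.factorial) * Real.exp (x^2/4) := by
            have := Real.exp_pos (x^2/4)
            nlinarith
  have hmaj : Integrable (fun x : ℝ => (1 + 4^k * k.factorial) * Real.exp (-(1/4) * x^2)) :=
    (integrable_exp_neg_mul_sq (by norm_num : (0:ℝ) < 1/4)).const_mul _
  refine hmaj.mono' ?_ ?_
  · exact ((measurable_id.pow_const k).mul
      (((measurable_id.pow_const 2).neg.div_const 2).exp)).aestronglyMeasurable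
  · filter_upwards with x
    have hx : ‖x ^ k * Real.exp (-x^2/2)‖ = |x|^k * Real.exp (-x^2/2) := by
      rw [norm_mul, norm_pow, Real.norm_eq_abs, Real.norm_eq_abs,
        abs_of_pos (Real.exp_pos _)]
    rw [hx]
    have := hC x
    have hsplit : Real.exp (-x^2/2) = Real.exp (-(1/4) * x^2) * Real.exp (-(x^2/4)) := by
      rw [← Real.exp_add]; ring_nf
    have hb : |x|^k * Real.exp (-x^2/2)
        ≤ ((1 + 4^k * k.factorial) * Real.exp (x^2/4)) * Real.exp (-x^2/2) := by
      apply mul_le_mul_of_nonneg_right this (Real.exp_pos _).le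
    calc |x|^k * Real.exp (-x^2/2)
        ≤ ((1 + 4^k * k.factorial) * Real.exp (x^2/4)) * Real.exp (-x^2/2) := hb
      _ = (1 + 4^k * k.factorial) * Real.exp (-(1/4) * x^2) := by
          rw [mul_assoc, ← Real.exp_add]; ring_nf
      _ ≤ (1 + 4^k * k.factorial) * Real.exp (-(1/4) * x^2) := le_refl _


noncomputable def J (k : ℕ) : ℝ := ∫ x : ℝ, x ^ k * Real.exp (-x^2/2)

lemma J_zero : J 0 = Real.sqrt (2*π) := by
  have h := integral_gaussian (1/2 : ℝ)
  have : J 0 = ∫ x : ℝ, Real.exp (-(1/2) * x^2) := by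
    unfold J
    congr 1
    funext x
    rw [pow_zero, one_mul]
    ring_nf
  rw [this, h]
  rw [show π / (1/2 : ℝ) = 2*π by ring]

lemma J_odd (k : ℕ) (hk : Odd k) : J k = 0 := by
  have h := integral_neg_eq_self (fun x : ℝ => x ^ k * Real.exp (-x^2/2)) volume
  have h2 : (∫ x : ℝ, (-x) ^ k * Real.exp (-(-x)^2/2)) = -J k := by
    unfold J
    rw [← integral_neg]
    congr 1
    funext x
    rw [hk.neg_pow, neg_sq]
    ring
  have key : J k = - J k := by
    conv_lhs => rw [show J k = ∫ x : ℝ, x ^ k * Real.exp (-x^2/2) from rfl, ← h]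
    exact h2
  linarith

lemma J_rec (k : ℕ) : J (k+2) = (k+1) * J k := by
  have H : ∀ x : ℝ, HasDerivAt (fun x : ℝ => x^(k+1) * Real.exp (-x^2/2))
      ((k+1) * (x^k * Real.exp (-x^2/2)) - x^(k+2) * Real.exp (-x^2/2)) x := by
    intro x
    have h1 : HasDerivAt (fun x : ℝ => x^(k+1)) ((k+1) * x^k) x := by
      simpa using hasDerivAt_pow (k+1) x
    have h0 : HasDerivAt (fun x : ℝ => -x^2/2) (-x) x := by
      have := ((hasDerivAt_pow 2 x).neg.div_const 2)
      refine this.congr_deriv ?_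
      simp
      ring
    have h2 : HasDerivAt (fun x : ℝ => Real.exp (-x^2/2)) (-x * Real.exp (-x^2/2)) x := by
      simpa [mul_comm] using h0.exp
    have := h1.mul h2
    refine this.congr_deriv ?_
    ring
  have hint : Integrable (fun x : ℝ =>
      (k+1) * (x^k * Real.exp (-x^2/2)) - x^(k+2) * Real.exp (-x^2/2)) :=
    ((integrable_pow_gauss k).const_mul _).sub (integrable_pow_gauss (k+2))
  have h0 := integral_eq_zero_of_hasDerivAt_of_integrable H hint (integrable_pow_gauss (k+1))
  rw [integral_sub ((integrable_pow_gauss k).const_mul _) (integrable_pow_gauss (k+2)),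
    integral_const_mul] at h0
  unfold J
  linarith [h0]

lemma gam_eq : gam = volume.withDensity
    (fun x => ((gaussianPDFReal 0 1 x).toNNReal : ℝ≥0∞)) := by
  rw [show gam = gaussianReal 0 1 from rfl, gaussianReal_of_var_ne_zero 0 one_ne_zero]
  rfl

lemma pdf_eq (x : ℝ) : gaussianPDFReal 0 1 x = (Real.sqrt (2*π))⁻¹ * Real.exp (-x^2/2) := by
  simp [gaussianPDFReal]

lemma integral_gam (f : ℝ → ℝ) :
    ∫ x, f x ∂gam = ∫ x, (Real.sqrt (2*π))⁻¹ * (Real.exp (-x^2/2) * f x) := by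
  rw [gam_eq, integral_withDensity_eq_integral_smul
    (show Measurable fun x => (gaussianPDFReal 0 1 x).toNNReal from measurable_real_toNNReal.comp (measurable_gaussianPDFReal 0 1)) f]
  congr 1
  funext x
  rw [NNReal.smul_def, Real.coe_toNNReal _ (gaussianPDFReal_nonneg 0 1 x), pdf_eq]
  simp [smul_eq_mul]
  ring

lemma integrable_gam_pow (k : ℕ) : Integrable (fun x : ℝ => x ^ k) gam := by
  rw [gam_eq, integrable_withDensity_iff_integrable_smul
    (show Measurable fun x => (gaussianPDFReal 0 1 x).toNNReal from measurable_real_toNNReal.comp (measurable_gaussianPDFReal 0 1))]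
  apply Integrable.congr (((integrable_pow_gauss k).const_mul ((Real.sqrt (2*π))⁻¹)))
  filter_upwards with x
  rw [NNReal.smul_def, Real.coe_toNNReal _ (gaussianPDFReal_nonneg 0 1 x), pdf_eq]
  simp [smul_eq_mul]
  ring

noncomputable def mg (k : ℕ) : ℝ := ∫ x, x ^ k ∂gam

lemma mg_eq (k : ℕ) : mg k = (Real.sqrt (2*π))⁻¹ * J k := by
  rw [mg, integral_gam, integral_const_mul, J]
  congr 1
  congr 1
  funext x
  ring

lemma sqrt_two_pi_pos : (0:ℝ) < Real.sqrt (2*π) := Real.sqrt_pos.mpr (by positivity)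

lemma mg_zero : mg 0 = 1 := by
  rw [mg_eq, J_zero, inv_mul_cancel₀ (ne_of_gt sqrt_two_pi_pos)]

lemma mg_one : mg 1 = 0 := by rw [mg_eq, J_odd 1 ⟨0, by ring⟩, mul_zero]

lemma mg_two : mg 2 = 1 := by
  have := J_rec 0
  rw [mg_eq, this, J_zero]
  push_cast
  field_simp
  norm_num

lemma mg_three : mg 3 = 0 := by rw [mg_eq, J_odd 3 ⟨1, by ring⟩, mul_zero]

lemma mg_four : mg 4 = 3 := by
  have h2 := J_rec 2
  have h0 := J_rec 0
  rw [mg_eq, h2, h0, J_zero]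
  push_cast
  field_simp
  ring


lemma integrable_pi_prod : ∀ {n : ℕ} (f : Fin n → ℝ → ℝ),
    (∀ i, Integrable (f i) gam) →
    Integrable (fun x : Fin n → ℝ => ∏ i, f i (x i)) (Measure.pi fun _ => gam) := by
  intro n
  induction n with
  | zero =>
      intro f hf
      simp only [Finset.univ_eq_empty, Finset.prod_empty]
      exact integrable_const _
  | succ n ih =>
      intro f hf
      have h := ((measurePreserving_piFinSuccAbove (fun _ : Fin (n+1) => gam) 0).symm)
      rw [← h.integrable_comp_emb (MeasurableEquiv.measurableEmbedding _)]
      simp_rw [MeasurableEquiv.piFinSuccAbove_symm_apply, Fin.insertNthEquiv,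
        Fin.prod_univ_succ, Fin.insertNth_zero]
      simp only [Fin.zero_succAbove, cast_eq, Function.comp_def, Fin.cons_zero, Fin.cons_succ]
      have h2 : Integrable (fun (x : Fin n → ℝ) ↦ ∏ j, f (Fin.succ j) (x j))
          (Measure.pi fun _ => gam) := ih (fun i => f (Fin.succ i)) (fun i ↦ hf _)
      exact Integrable.mul_prod (hf 0) h2

lemma integral_pi_prod : ∀ {n : ℕ} (f : Fin n → ℝ → ℝ),
    ∫ x : Fin n → ℝ, ∏ i, f i (x i) ∂(Measure.pi fun _ => gam) = ∏ i, ∫ y, f i y ∂gam := by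
  intro n
  induction n with
  | zero => simp
  | succ n ih =>
      intro f
      calc
        _ = ∫ x : ℝ × (Fin n → ℝ),
            f 0 x.1 * ∏ i : Fin n, f (Fin.succ i) (x.2 i)
            ∂(gam.prod (Measure.pi fun _ => gam)) := by
          rw [← ((measurePreserving_piFinSuccAbove
            (fun _ : Fin (n+1) => gam) 0).symm).integral_comp']
          congr 1
          funext x
          simp only [MeasurableEquiv.piFinSuccAbove_symm_apply, Fin.insertNthEquiv,
            Fin.insertNth_zero, Equiv.coe_fn_mk, Fin.prod_univ_succ,
            Fin.zero_succAbove, cast_eq, Fin.cons_zero, Fin.cons_succ]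
        _ = (∫ y, f 0 y ∂gam) * ∏ i : Fin n, ∫ y, f (Fin.succ i) y ∂gam := by
          rw [← ih fun i => f (Fin.succ i), ← integral_prod_mul]
        _ = ∏ i, ∫ y, f i y ∂gam := by rw [Fin.prod_univ_succ]


lemma int_pow_eq (k : ℕ) : (∫ y : ℝ, y ^ k ∂gam) = mg k := rfl

variable {n : ℕ}

def ind (a t : Fin n) : ℕ := if a = t then 1 else 0

noncomputable def D (a b : Fin n) : ℝ := if a = b then 1 else 0

lemma prod_pow_ind (x : Fin n → ℝ) (a : Fin n) : (∏ t, x t ^ ind a t) = x a := by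
  have h : ∀ t ∈ Finset.univ, x t ^ ind a t = if a = t then x t else 1 := by
    intro t _
    unfold ind
    split_ifs <;> simp
  rw [Finset.prod_congr rfl h, Finset.prod_ite_eq]
  simp

lemma prod_pow_add (x : Fin n → ℝ) (e f : Fin n → ℕ) :
    (∏ t, x t ^ (e t + f t)) = (∏ t, x t ^ e t) * ∏ t, x t ^ f t := by
  simp [pow_add, Finset.prod_mul_distrib]

lemma mono2_eq (x : Fin n → ℝ) (i j : Fin n) :
    x i * x j = ∏ t, x t ^ (ind i t + ind j t) := by
  rw [prod_pow_add, prod_pow_ind, prod_pow_ind]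

lemma mono3_eq (x : Fin n → ℝ) (i j k : Fin n) :
    x i * x j * x k = ∏ t, x t ^ (ind i t + ind j t + ind k t) := by
  rw [prod_pow_add, prod_pow_add, prod_pow_ind, prod_pow_ind, prod_pow_ind]

lemma mono4_eq (x : Fin n → ℝ) (i j k l : Fin n) :
    x i * x j * (x k * x l) = ∏ t, x t ^ (ind i t + ind j t + (ind k t + ind l t)) := by
  rw [prod_pow_add, prod_pow_add, prod_pow_add, prod_pow_ind, prod_pow_ind,
    prod_pow_ind, prod_pow_ind]

lemma integrable_mono2 (i j : Fin n) :
    Integrable (fun x : Fin n → ℝ => x i * x j) (Measure.pi fun _ => gam) := by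
  have : (fun x : Fin n → ℝ => x i * x j)
      = fun x => ∏ t, (fun t y => y ^ (ind i t + ind j t)) t (x t) := by
    funext x; exact mono2_eq x i j
  rw [this]
  exact integrable_pi_prod _ (fun t => integrable_gam_pow _)

lemma integrable_mono3 (i j k : Fin n) :
    Integrable (fun x : Fin n → ℝ => x i * x j * x k) (Measure.pi fun _ => gam) := by
  have : (fun x : Fin n → ℝ => x i * x j * x k)
      = fun x => ∏ t, (fun t y => y ^ (ind i t + ind j t + ind k t)) t (x t) := by
    funext x; exact mono3_eq x i j k
  rw [this]
  exact integrable_pi_prod _ (fun t => integrable_gam_pow _)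

lemma integrable_mono4 (i j k l : Fin n) :
    Integrable (fun x : Fin n → ℝ => x i * x j * (x k * x l)) (Measure.pi fun _ => gam) := by
  have : (fun x : Fin n → ℝ => x i * x j * (x k * x l))
      = fun x => ∏ t, (fun t y => y ^ (ind i t + ind j t + (ind k t + ind l t))) t (x t) := by
    funext x; exact mono4_eq x i j k l
  rw [this]
  exact integrable_pi_prod _ (fun t => integrable_gam_pow _)

lemma integral_mono2 (i j : Fin n) :
    ∫ x : Fin n → ℝ, x i * x j ∂(Measure.pi fun _ => gam) = D i j := by
  have : (fun x : Fin n → ℝ => x i * x j)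
      = fun x => ∏ t, (fun t y => y ^ (ind i t + ind j t)) t (x t) := by
    funext x; exact mono2_eq x i j
  rw [this, integral_pi_prod (fun t y => y ^ (ind i t + ind j t))]
  simp only [int_pow_eq]
  by_cases h : i = j
  · subst h
    rw [show D i i = 1 by simp [D]]
    apply Finset.prod_eq_one
    intro t _
    by_cases ht : i = t
    · simp [ind, ht, mg_two]
    · simp [ind, ht, mg_zero]
  · rw [show D i j = 0 by simp [D, h]]
    apply Finset.prod_eq_zero (Finset.mem_univ i)
    have hj : ¬ j = i := fun hh => h hh.symm
    simp [ind, hj, mg_one]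

lemma integral_mono4 (i j k l : Fin n) :
    ∫ x : Fin n → ℝ, x i * x j * (x k * x l) ∂(Measure.pi fun _ => gam)
      = D i j * D k l + D i k * D j l + D i l * D j k := by
  have : (fun x : Fin n → ℝ => x i * x j * (x k * x l))
      = fun x => ∏ t, (fun t y => y ^ (ind i t + ind j t + (ind k t + ind l t))) t (x t) := by
    funext x; exact mono4_eq x i j k l
  rw [this, integral_pi_prod (fun t y => y ^ (ind i t + ind j t + (ind k t + ind l t)))]
  simp only [int_pow_eq]
  -- helper to prove the product is zero when some index appears an odd number of times
  have hzero : ∀ (w : Fin n), (ind i w + ind j w + (ind k w + ind l w) = 1 ∨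
      ind i w + ind j w + (ind k w + ind l w) = 3) →
      (∏ t, mg (ind i t + ind j t + (ind k t + ind l t))) = 0 := by
    intro w hw
    apply Finset.prod_eq_zero (Finset.mem_univ w)
    rcases hw with hw | hw <;> rw [hw]
    · exact mg_one
    · exact mg_three
  by_cases hij : i = j <;> by_cases hkl : k = l
  · -- i = j, k = l
    subst hij; subst hkl
    by_cases hik : i = k
    · subst hik
      rw [Fintype.prod_eq_single i (fun t ht => by
        have : ¬ i = t := fun hh => ht hh.symm
        simp [ind, this, mg_zero])]
      norm_num [ind, D, mg_four]
    · have h1 : (∏ t, mg (ind i t + ind i t + (ind k t + ind k t))) = 1 := by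
        apply Finset.prod_eq_one
        intro t _
        by_cases h1 : i = t
        · by_cases h2 : k = t
          · exact absurd (h1.trans h2.symm) hik
          · simp [ind, h1, h2, mg_two]
        · by_cases h2 : k = t
          · simp [ind, h1, h2, mg_two]
          · simp [ind, h1, h2, mg_zero]
      rw [h1]
      simp [D, hik]
  · -- i = j, k ≠ l
    subst hij
    have hlk : ¬ l = k := fun hh => hkl hh.symm
    rw [hzero k (by by_cases h : i = k <;> simp [ind, h, hlk])]
    by_cases hik : i = k <;> by_cases hil : i = l
    · exact absurd (hik.symm.trans hil) hkl
    · simp [D, hkl, hil]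
    · simp [D, hkl, hik]
    · simp [D, hkl, hik, hil]
  · -- i ≠ j, k = l
    subst hkl
    have hji : ¬ j = i := fun hh => hij hh.symm
    rw [hzero i (by by_cases h : k = i <;> simp [ind, h, hji])]
    by_cases hik : i = k <;> by_cases hjk : j = k
    · exact absurd (hik.trans hjk.symm) hij
    · simp [D, hij, hjk]
    · simp [D, hij, hik]
    · simp [D, hij, hik, hjk]
  · -- i ≠ j, k ≠ l
    have hji : ¬ j = i := fun hh => hij hh.symm
    have hlk : ¬ l = k := fun hh => hkl hh.symm
    by_cases hik : i = k <;> by_cases hjl : j = l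
    · -- i = k, j = l : pair-pair
      subst hik; subst hjl
      have h1 : (∏ t, mg (ind i t + ind j t + (ind i t + ind j t))) = 1 := by
        apply Finset.prod_eq_one
        intro t _
        by_cases h1 : i = t
        · by_cases h2 : j = t
          · exact absurd (h1.trans h2.symm) hij
          · simp [ind, h1, h2, mg_two]
        · by_cases h2 : j = t
          · simp [ind, h1, h2, mg_two]
          · simp [ind, h1, h2, mg_zero]
      rw [h1]
      have hjinek : ¬ i = j := hij
      have h2 : ¬ j = i := hji
      simp [D, hij, hji]
    · -- i = k, j ≠ l
      subst hik
      have hlj : ¬ l = j := fun hh => hjl hh.symm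
      rw [hzero j (by simp [ind, hij, hji, hlj])]
      by_cases hil : i = l
      · simp [D, hij, hjl, hji, hil, hlj]
      · simp [D, hij, hjl, hil]
    · -- i ≠ k, j = l
      subst hjl
      have hki : ¬ k = i := fun hh => hik hh.symm
      rw [hzero i (by simp [ind, hji, hki, hij])]
      by_cases hjk : j = k
      · simp [D, hij, hik, hjk]
      · simp [D, hij, hik, hjk]
    · -- i ≠ k, j ≠ l
      have hki : ¬ k = i := fun hh => hik hh.symm
      by_cases hil : i = l <;> by_cases hjk : j = k
      · -- i = l, j = k : pair-pair (cross)
        subst hil; subst hjk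
        have h1 : (∏ t, mg (ind i t + ind j t + (ind j t + ind i t))) = 1 := by
          apply Finset.prod_eq_one
          intro t _
          by_cases h1 : i = t
          · by_cases h2 : j = t
            · exact absurd (h1.trans h2.symm) hij
            · simp [ind, h1, h2, mg_two]
          · by_cases h2 : j = t
            · simp [ind, h1, h2, mg_two]
            · simp [ind, h1, h2, mg_zero]
        rw [h1]
        simp [D, hij, hik, hji]
      · -- i = l, j ≠ k
        subst hil
        have hkj : ¬ k = j := fun hh => hjk hh.symm
        rw [hzero j (by simp [ind, hij, hji, hkj])]
        simp [D, hij, hjl, hjk]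
      · -- i ≠ l, j = k
        subst hjk
        have hli : ¬ l = i := fun hh => hil hh.symm
        rw [hzero i (by simp [ind, hij, hji, hli])]
        simp [D, hij, hik, hil]
      · have hli : ¬ l = i := fun hh => hil hh.symm
        rw [hzero i (by simp [ind, hji, hki, hli])]
        simp [D, hij, hik, hil]


lemma measurable_dotl (u : Fin n → ℝ) : Measurable (fun x : Fin n → ℝ => dot u x) := by
  unfold dot
  exact Finset.measurable_sum _ (fun i _ => (measurable_pi_apply i).const_mul _)

lemma expand2 (u w : Fin n → ℝ) (x : Fin n → ℝ) :
    dot u x * dot w x = ∑ p : Fin n × Fin n, (u p.1 * w p.2) * (x p.1 * x p.2) := by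
  rw [dot, dot, Finset.sum_mul_sum, ← Finset.sum_product']
  rw [show (Finset.univ ×ˢ Finset.univ : Finset (Fin n × Fin n)) = Finset.univ from rfl]
  apply Finset.sum_congr rfl
  intro p _
  ring

lemma integrable_L2 (u w : Fin n → ℝ) :
    Integrable (fun x : Fin n → ℝ => dot u x * dot w x) (Measure.pi fun _ => gam) := by
  have : (fun x : Fin n → ℝ => dot u x * dot w x)
      = fun x => ∑ p : Fin n × Fin n, (u p.1 * w p.2) * (x p.1 * x p.2) := by
    funext x; exact expand2 u w x
  rw [this]
  exact integrable_finset_sum _ (fun p _ => (integrable_mono2 p.1 p.2).const_mul _)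

lemma collapse_uw (u w : Fin n → ℝ) :
    ∑ p : Fin n × Fin n, (u p.1 * w p.2) * D p.1 p.2 = dot u w := by
  rw [Fintype.sum_prod_type, dot]
  simp [D, mul_ite, Finset.sum_ite_eq]

lemma integral_L2 (u w : Fin n → ℝ) :
    ∫ x : Fin n → ℝ, dot u x * dot w x ∂(Measure.pi fun _ => gam) = dot u w := by
  have : (fun x : Fin n → ℝ => dot u x * dot w x)
      = fun x => ∑ p : Fin n × Fin n, (u p.1 * w p.2) * (x p.1 * x p.2) := by
    funext x; exact expand2 u w x
  rw [this, integral_finset_sum _ (fun p _ => (integrable_mono2 p.1 p.2).const_mul _)]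
  calc ∑ p : Fin n × Fin n, ∫ x : Fin n → ℝ, (u p.1 * w p.2) * (x p.1 * x p.2)
          ∂(Measure.pi fun _ => gam)
      = ∑ p : Fin n × Fin n, (u p.1 * w p.2) * D p.1 p.2 := by
        apply Finset.sum_congr rfl
        intro p _
        rw [integral_const_mul, integral_mono2]
    _ = dot u w := collapse_uw u w

lemma expand4 (u w : Fin n → ℝ) (x : Fin n → ℝ) :
    (dot u x * dot w x) * (dot u x * dot w x)
      = ∑ p : Fin n × Fin n, ∑ q : Fin n × Fin n,
          ((u p.1 * w p.2) * (u q.1 * w q.2)) * (x p.1 * x p.2 * (x q.1 * x q.2)) := by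
  rw [expand2 u w x, Finset.sum_mul_sum]
  apply Finset.sum_congr rfl
  intro p _
  apply Finset.sum_congr rfl
  intro q _
  ring

lemma integrable_L4 (u w : Fin n → ℝ) :
    Integrable (fun x : Fin n → ℝ => (dot u x * dot w x) * (dot u x * dot w x))
      (Measure.pi fun _ => gam) := by
  have : (fun x : Fin n → ℝ => (dot u x * dot w x) * (dot u x * dot w x))
      = fun x => ∑ p : Fin n × Fin n, ∑ q : Fin n × Fin n,
          ((u p.1 * w p.2) * (u q.1 * w q.2)) * (x p.1 * x p.2 * (x q.1 * x q.2)) := by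
    funext x; exact expand4 u w x
  rw [this]
  exact integrable_finset_sum _ (fun p _ => integrable_finset_sum _
    (fun q _ => (integrable_mono4 p.1 p.2 q.1 q.2).const_mul _))

lemma integrable_L3 (u w : Fin n → ℝ) :
    Integrable (fun x : Fin n → ℝ => (dot u x * dot w x) * dot w x)
      (Measure.pi fun _ => gam) := by
  have h : ∀ x : Fin n → ℝ, (dot u x * dot w x) * dot w x
      = ∑ p : Fin n × Fin n, ∑ k : Fin n, ((u p.1 * w p.2) * w k) * (x p.1 * x p.2 * x k) := by
    intro x
    rw [expand2 u w x, dot, Finset.sum_mul]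
    apply Finset.sum_congr rfl
    intro p _
    rw [Finset.mul_sum]
    apply Finset.sum_congr rfl
    intro k _
    ring
  have : (fun x : Fin n → ℝ => (dot u x * dot w x) * dot w x)
      = fun x => ∑ p : Fin n × Fin n, ∑ k : Fin n,
          ((u p.1 * w p.2) * w k) * (x p.1 * x p.2 * x k) := by
    funext x; exact h x
  rw [this]
  exact integrable_finset_sum _ (fun p _ => integrable_finset_sum _
    (fun k _ => (integrable_mono3 p.1 p.2 k).const_mul _))

lemma sum_S1 (u w : Fin n → ℝ) :
    ∑ p : Fin n × Fin n, ∑ q : Fin n × Fin n,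
      ((u p.1 * w p.2) * (u q.1 * w q.2)) * (D p.1 p.2 * D q.1 q.2)
      = dot u w * dot u w := by
  rw [← collapse_uw u w, Finset.sum_mul_sum]
  apply Finset.sum_congr rfl; intro p _
  apply Finset.sum_congr rfl; intro q _
  ring

lemma sum_S2 (u w : Fin n → ℝ) :
    ∑ p : Fin n × Fin n, ∑ q : Fin n × Fin n,
      ((u p.1 * w p.2) * (u q.1 * w q.2)) * (D p.1 q.1 * D p.2 q.2)
      = dot u u * dot w w := by
  rw [show dot u u * dot w w
      = ∑ p : Fin n × Fin n, (u p.1 * w p.2) * (u p.1 * w p.2) by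
    rw [dot, dot, Finset.sum_mul_sum, ← Finset.sum_product']
    rw [show (Finset.univ ×ˢ Finset.univ : Finset (Fin n × Fin n)) = Finset.univ from rfl]
    apply Finset.sum_congr rfl; intro p _; ring]
  apply Finset.sum_congr rfl
  intro p _
  rw [Fintype.sum_prod_type]
  simp [D, mul_ite, ite_mul, Finset.sum_ite_eq, Finset.mul_sum]

lemma sum_S3 (u w : Fin n → ℝ) :
    ∑ p : Fin n × Fin n, ∑ q : Fin n × Fin n,
      ((u p.1 * w p.2) * (u q.1 * w q.2)) * (D p.1 q.2 * D p.2 q.1)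
      = dot u w * dot u w := by
  rw [show dot u w * dot u w
      = ∑ p : Fin n × Fin n, (u p.1 * w p.2) * (u p.2 * w p.1) by
    rw [dot, Finset.sum_mul_sum, ← Finset.sum_product']
    rw [show (Finset.univ ×ˢ Finset.univ : Finset (Fin n × Fin n)) = Finset.univ from rfl]
    apply Finset.sum_congr rfl; intro p _; ring]
  apply Finset.sum_congr rfl
  intro p _
  rw [Fintype.sum_prod_type]
  simp [D, mul_ite, ite_mul, Finset.sum_ite_eq, Finset.mul_sum]

lemma integral_L4 (u w : Fin n → ℝ) :
    ∫ x : Fin n → ℝ, (dot u x * dot w x) * (dot u x * dot w x) ∂(Measure.pi fun _ => gam)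
      = dot u u * dot w w + 2 * (dot u w * dot u w) := by
  have : (fun x : Fin n → ℝ => (dot u x * dot w x) * (dot u x * dot w x))
      = fun x => ∑ p : Fin n × Fin n, ∑ q : Fin n × Fin n,
          ((u p.1 * w p.2) * (u q.1 * w q.2)) * (x p.1 * x p.2 * (x q.1 * x q.2)) := by
    funext x; exact expand4 u w x
  rw [this, integral_finset_sum _ (fun p _ => integrable_finset_sum _
    (fun q _ => (integrable_mono4 p.1 p.2 q.1 q.2).const_mul _))]
  have hstep : ∀ p : Fin n × Fin n,
      ∑ q : Fin n × Fin n, ∫ x : Fin n → ℝ,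
        ((u p.1 * w p.2) * (u q.1 * w q.2)) * (x p.1 * x p.2 * (x q.1 * x q.2))
        ∂(Measure.pi fun _ => gam)
      = ∑ q : Fin n × Fin n, ((u p.1 * w p.2) * (u q.1 * w q.2)) *
          (D p.1 p.2 * D q.1 q.2 + D p.1 q.1 * D p.2 q.2 + D p.1 q.2 * D p.2 q.1) := by
    intro p
    apply Finset.sum_congr rfl
    intro q _
    rw [integral_const_mul, integral_mono4]
  rw [Finset.sum_congr rfl (fun p _ => integral_finset_sum _
    (fun q _ => (integrable_mono4 p.1 p.2 q.1 q.2).const_mul _))]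
  rw [Finset.sum_congr rfl (fun p _ => hstep p)]
  have hsplit : ∀ p q : Fin n × Fin n,
      ((u p.1 * w p.2) * (u q.1 * w q.2)) *
          (D p.1 p.2 * D q.1 q.2 + D p.1 q.1 * D p.2 q.2 + D p.1 q.2 * D p.2 q.1)
      = ((u p.1 * w p.2) * (u q.1 * w q.2)) * (D p.1 p.2 * D q.1 q.2)
        + (((u p.1 * w p.2) * (u q.1 * w q.2)) * (D p.1 q.1 * D p.2 q.2)
        + ((u p.1 * w p.2) * (u q.1 * w q.2)) * (D p.1 q.2 * D p.2 q.1)) := by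
    intro p q; ring
  simp_rw [hsplit, Finset.sum_add_distrib]
  rw [sum_S1, sum_S2, sum_S3]
  ring



lemma mono1_eq (x : Fin n → ℝ) (i : Fin n) : x i = ∏ t, x t ^ ind i t := by
  rw [prod_pow_ind]

lemma integrable_mono1 (i : Fin n) :
    Integrable (fun x : Fin n → ℝ => x i) (Measure.pi fun _ => gam) := by
  have : (fun x : Fin n → ℝ => x i)
      = fun x => ∏ t, (fun t y => y ^ ind i t) t (x t) := by
    funext x; exact mono1_eq x i
  rw [this]
  exact integrable_pi_prod _ (fun t => integrable_gam_pow _)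

lemma integrable_L1 (u : Fin n → ℝ) :
    Integrable (fun x : Fin n → ℝ => dot u x) (Measure.pi fun _ => gam) := by
  have : (fun x : Fin n → ℝ => dot u x) = fun x => ∑ i, u i * x i := by
    funext x
    rfl
  rw [this]
  exact integrable_finset_sum _ (fun i _ => (integrable_mono1 i).const_mul _)

lemma dot_smul {n : ℕ} (v y : Fin n → ℝ) (c : ℝ) : dot v (c • y) = c * dot v y := by
  unfold dot
  rw [Finset.mul_sum]
  apply Finset.sum_congr rfl
  intro i _
  simp [smul_eq_mul]
  ring

end SGAux

open SGAux in
/-- The shortcut signal injects variance at least `A²` into orthogonal directions. -/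
theorem stmt1 {n : ℕ} {Ω : Type*} [MeasurableSpace Ω]
    (P : Measure Ω) [IsProbabilityMeasure P]
    (z : Ω → Fin n → ℝ) (ξ : Ω → ℝ)
    (hz : Measurable z) (hξ : Measurable ξ)
    (hlaw : Measure.map z P = stdGaussianPi n)
    (hindep : IndepFun z ξ P)
    (hξ2 : MemLp ξ 2 P) (hξmean : ∫ ω, ξ ω ∂P = 0)
    (A : ℝ) (es gm v g : Fin n → ℝ)
    (hes : dot es es = 1) (hgm : dot gm es = 0)
    (hv : dot v v = 1) (hve : dot v es = 0)
    (hg : g = A • es + gm) :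
    A ^ 2 ≤ variance (fun ω => dot v ((dot g (z ω) + ξ ω) • z ω)) P := by
  classical
  set μn : Measure (Fin n → ℝ) := (Measure.pi fun _ => gam) with hμn
  have hlaw' : Measure.map z P = μn := hlaw
  -- transfer lemmas
  have htInt : ∀ f : (Fin n → ℝ) → ℝ, Measurable f →
      ∫ ω, f (z ω) ∂P = ∫ x, f x ∂μn := by
    intro f hf
    rw [← hlaw', integral_map hz.aemeasurable hf.aestronglyMeasurable]
  have htI : ∀ f : (Fin n → ℝ) → ℝ, Measurable f → Integrable f μn →
      Integrable (fun ω => f (z ω)) P := by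
    intro f hf hfi
    rw [← hlaw'] at hfi
    exact (integrable_map_measure hf.aestronglyMeasurable hz.aemeasurable).mp hfi
  -- the three building blocks
  set X : Ω → ℝ := fun ω => dot g (z ω) * dot v (z ω) with hX
  set Y : Ω → ℝ := fun ω => ξ ω * dot v (z ω) with hY
  have hTeq : (fun ω => dot v ((dot g (z ω) + ξ ω) • z ω)) = fun ω => X ω + Y ω := by
    funext ω
    rw [dot_smul]
    simp only [hX, hY]
    ring
  rw [hTeq]
  have hmg : Measurable fun x : Fin n → ℝ => dot g x * dot v x :=
    (measurable_dotl g).mul (measurable_dotl v)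
  have hmv : Measurable fun x : Fin n → ℝ => dot v x := measurable_dotl v
  -- independence gadgets
  have hIξv : IndepFun (fun ω => dot v (z ω)) ξ P :=
    hindep.comp (measurable_dotl v) measurable_id
  have hIξgv2 : IndepFun (fun ω => (dot g (z ω) * dot v (z ω)) * dot v (z ω)) ξ P :=
    hindep.comp ((hmg.mul hmv)) measurable_id
  have hIξv2 : IndepFun (fun ω => dot v (z ω) * dot v (z ω)) (fun ω => ξ ω * ξ ω) P :=
    hindep.comp (hmv.mul hmv) (measurable_id.mul measurable_id)
  have hξint : Integrable ξ P := hξ2.integrable one_le_two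
  have hξsq : Integrable (fun ω => ξ ω * ξ ω) P := by
    have := (memLp_two_iff_integrable_sq hξ2.aestronglyMeasurable).mp hξ2
    exact this.congr (by filter_upwards with ω; ring)
  -- integrability over P
  have hXi : Integrable X P := htI _ hmg (integrable_L2 g v)
  have hX2i : Integrable (fun ω => X ω * X ω) P := by
    have := htI _ (hmg.mul hmg) (integrable_L4 g v)
    exact this.congr (by filter_upwards with ω; simp [hX])
  have hYi : Integrable Y P := by
    have := (hIξv.integrable_mul (htI _ hmv (integrable_L1 v)) hξint)
    exact this.congr (by filter_upwards with ω; simp [hY, Pi.mul_apply]; ring)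
  have hXYi : Integrable (fun ω => ((dot g (z ω) * dot v (z ω)) * dot v (z ω)) * ξ ω) P :=
    hIξgv2.integrable_mul (htI _ (hmg.mul hmv) (integrable_L3 g v)) hξint
  have hY2i : Integrable (fun ω => (dot v (z ω) * dot v (z ω)) * (ξ ω * ξ ω)) P :=
    hIξv2.integrable_mul (htI _ (hmv.mul hmv) (integrable_L2 v v)) hξsq
  -- MemLp
  have hXm : AEStronglyMeasurable X P := ((hmg.comp hz)).aestronglyMeasurable
  have hYm : AEStronglyMeasurable Y P := (hξ.mul (hmv.comp hz)).aestronglyMeasurable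
  have hXL2 : MemLp X 2 P := by
    refine (memLp_two_iff_integrable_sq hXm).mpr ?_
    exact hX2i.congr (by filter_upwards with ω; ring)
  have hYL2 : MemLp Y 2 P := by
    refine (memLp_two_iff_integrable_sq hYm).mpr ?_
    exact hY2i.congr (by filter_upwards with ω; simp [hY]; ring)
  have hTL2 : MemLp (fun ω => X ω + Y ω) 2 P := hXL2.add hYL2
  -- integrals
  have hEX : ∫ ω, X ω ∂P = dot g v := by
    rw [show (fun ω => X ω) = fun ω => dot g (z ω) * dot v (z ω) from rfl,
      htInt _ hmg, integral_L2]
  have hEY : ∫ ω, Y ω ∂P = 0 := by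
    have h := hIξv.symm.integral_mul_eq_mul_integral hξ2.aestronglyMeasurable
      ((hmv.comp hz)).aestronglyMeasurable
    have h2 : ∫ ω, Y ω ∂P = (∫ ω, ξ ω ∂P) * ∫ ω, dot v (z ω) ∂P := by
      rw [← h]
      congr 1
    rw [h2, hξmean, zero_mul]
  have hEX2 : ∫ ω, X ω * X ω ∂P = dot g g * dot v v + 2 * (dot g v * dot g v) := by
    have h : ∫ ω, X ω * X ω ∂P
        = ∫ ω, (fun x => (dot g x * dot v x) * (dot g x * dot v x)) (z ω) ∂P := by
      congr 1
    rw [h, htInt (fun x => (dot g x * dot v x) * (dot g x * dot v x)) (hmg.mul hmg), integral_L4]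
  have hEXY : ∫ ω, ((dot g (z ω) * dot v (z ω)) * dot v (z ω)) * ξ ω ∂P = 0 := by
    have h := hIξgv2.integral_mul_eq_mul_integral ((hmg.mul hmv).comp hz).aestronglyMeasurable
      hξ2.aestronglyMeasurable
    have h2 : ∫ ω, ((dot g (z ω) * dot v (z ω)) * dot v (z ω)) * ξ ω ∂P
        = (∫ ω, (dot g (z ω) * dot v (z ω)) * dot v (z ω) ∂P) * ∫ ω, ξ ω ∂P := by
      rw [← h]
      congr 1
    rw [h2, hξmean, mul_zero]
  have hEY2 : ∫ ω, (dot v (z ω) * dot v (z ω)) * (ξ ω * ξ ω) ∂P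
      = ∫ ω, ξ ω * ξ ω ∂P := by
    have h := hIξv2.integral_mul_eq_mul_integral ((hmv.mul hmv).comp hz).aestronglyMeasurable
      (hξ.mul hξ).aestronglyMeasurable
    have h2 : ∫ ω, (dot v (z ω) * dot v (z ω)) * (ξ ω * ξ ω) ∂P
        = (∫ ω, dot v (z ω) * dot v (z ω) ∂P) * ∫ ω, ξ ω * ξ ω ∂P := by
      rw [← h]
      congr 1
    rw [h2, htInt (fun x => dot v x * dot v x) (hmv.mul hmv), integral_L2, hv, one_mul]
  -- variance computation
  rw [variance_eq_sub hTL2]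
  have hET : ∫ ω, (fun ω => X ω + Y ω) ω ∂P = dot g v := by
    simp only []
    rw [integral_add hXi hYi, hEX, hEY, add_zero]
  have hsq : ∀ ω : Ω, ((fun ω => X ω + Y ω) ^ 2) ω
      = X ω * X ω + (2 * (((dot g (z ω) * dot v (z ω)) * dot v (z ω)) * ξ ω)
        + (dot v (z ω) * dot v (z ω)) * (ξ ω * ξ ω)) := by
    intro ω
    simp only [Pi.pow_apply, hX, hY]
    ring
  have hET2 : ∫ ω, ((fun ω => X ω + Y ω) ^ 2) ω ∂P
      = (dot g g * dot v v + 2 * (dot g v * dot g v)) + (2 * 0 + ∫ ω, ξ ω * ξ ω ∂P) := by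
    rw [integral_congr_ae (Filter.Eventually.of_forall hsq)]
    have h2m : Integrable (fun ω => 2 * (((dot g (z ω) * dot v (z ω)) * dot v (z ω)) * ξ ω)) P := by
      exact hXYi.const_mul 2
    have hsum2 : Integrable (fun ω => 2 * (((dot g (z ω) * dot v (z ω)) * dot v (z ω)) * ξ ω)
        + (dot v (z ω) * dot v (z ω)) * (ξ ω * ξ ω)) P := by
      exact h2m.add hY2i
    rw [integral_add hX2i hsum2, integral_add h2m hY2i, integral_const_mul, hEX2, hEXY, hEY2]
  rw [hET2, hET]
  -- final arithmetic
  have hgg : dot g g = A ^ 2 + dot gm gm := by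
    subst hg
    unfold dot
    have h1 : ∀ i ∈ Finset.univ, ((A • es + gm) i * (A • es + gm) i)
        = A ^ 2 * (es i * es i) + 2 * A * (gm i * es i) + gm i * gm i := by
      intro i _
      simp [smul_eq_mul]
      ring
    rw [Finset.sum_congr rfl h1, Finset.sum_add_distrib, Finset.sum_add_distrib,
      ← Finset.mul_sum, ← Finset.mul_sum]
    unfold dot at hes hgm
    rw [hes, hgm]
    ring
  have hgm2 : 0 ≤ dot gm gm := Finset.sum_nonneg fun i _ => mul_self_nonneg _
  have hξsq_nonneg : 0 ≤ ∫ ω, ξ ω * ξ ω ∂P :=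
    integral_nonneg fun ω => mul_self_nonneg _
  rw [hv, hgg]
  nlinarith [mul_self_nonneg (dot g v)]
end

section
/- Fix the softmax probability simplex shortcut: let o ∈ R^C be a logit vector with at least two distinct entries, and for c > 0 define p(c·o) = softmax(c·o) and H(c) = −Σ_k p_k(c·o) log p_k(c·o). Then H is strictly decreasing in c on (0, ∞); in particular, entropy can be reduced arbitrarily by logit-norm inflation without changing the argmax prediction. -/
/-- Softmax over `Fin C`. -/
noncomputable def softmaxC {C : ℕ} (x : Fin C → ℝ) (k : Fin C) : ℝ :=
  Real.exp (x k) / ∑ j, Real.exp (x j)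

/-- Shannon entropy of a probability vector. -/
noncomputable def entropyC {C : ℕ} (q : Fin C → ℝ) : ℝ :=
  -∑ k, q k * Real.log (q k)

lemma sum_exp_pos' {C : ℕ} [Nonempty (Fin C)] (x : Fin C → ℝ) :
    0 < ∑ j, Real.exp (x j) :=
  Finset.sum_pos (fun j _ => Real.exp_pos _) Finset.univ_nonempty

lemma entropy_softmax' {C : ℕ} [Nonempty (Fin C)] (x : Fin C → ℝ) :
    entropyC (softmaxC x) =
      Real.log (∑ j, Real.exp (x j)) - (∑ k, x k * Real.exp (x k)) / (∑ j, Real.exp (x j)) := by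
  have hS := sum_exp_pos' x
  have hterm : ∀ k : Fin C, softmaxC x k * Real.log (softmaxC x k)
      = (x k * Real.exp (x k)) / (∑ j, Real.exp (x j))
        - Real.log (∑ j, Real.exp (x j)) * (Real.exp (x k) / (∑ j, Real.exp (x j))) := by
    intro k
    unfold softmaxC
    rw [Real.log_div (Real.exp_ne_zero _) hS.ne', Real.log_exp]
    ring
  unfold entropyC
  rw [Finset.sum_congr rfl (fun k _ => hterm k), Finset.sum_sub_distrib,
    ← Finset.sum_div, ← Finset.mul_sum, ← Finset.sum_div]
  field_simp
  ring

/-- For a non-constant logit vector `o`, the entropy of `softmax(c·o)` is strictly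
decreasing in `c > 0`, while the ordering of the softmax probabilities (hence the
argmax prediction) is unchanged. -/
theorem stmt7 {C : ℕ} (o : Fin C → ℝ) (hne : ∃ i j, o i ≠ o j) :
    StrictAntiOn (fun c : ℝ => entropyC (softmaxC (c • o))) (Set.Ioi 0) ∧
    ∀ c ∈ Set.Ioi (0:ℝ), ∀ k j, (softmaxC (c • o) j ≤ softmaxC (c • o) k ↔ o j ≤ o k) := by
  obtain ⟨i0, j0, hij⟩ := hne
  haveI : Nonempty (Fin C) := ⟨i0⟩
  have hS : ∀ c : ℝ, 0 < ∑ j, Real.exp (c * o j) :=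
    fun c => Finset.sum_pos (fun j _ => Real.exp_pos _) Finset.univ_nonempty
  constructor
  · -- strict antitonicity
    have hfeq : (fun c : ℝ => entropyC (softmaxC (c • o)))
        = fun c => Real.log (∑ j, Real.exp (c * o j))
            - (∑ k, (c * o k) * Real.exp (c * o k)) / (∑ j, Real.exp (c * o j)) := by
      funext c
      have := entropy_softmax' (c • o)
      simpa [Pi.smul_apply, smul_eq_mul] using this
    rw [hfeq]
    have hSd : ∀ c : ℝ, HasDerivAt (fun c => ∑ j, Real.exp (c * o j))
        (∑ j, o j * Real.exp (c * o j)) c := by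
      intro c
      apply HasDerivAt.fun_sum
      intro j _
      have h1 : HasDerivAt (fun c : ℝ => c * o j) (o j) c := by
        simpa using (hasDerivAt_id c).mul_const (o j)
      simpa [mul_comm] using h1.exp
    have hNd : ∀ c : ℝ, HasDerivAt (fun c => ∑ k, (c * o k) * Real.exp (c * o k))
        ((∑ k, o k * Real.exp (c * o k)) + c * ∑ k, o k ^ 2 * Real.exp (c * o k)) c := by
      intro c
      have hterm : ∀ k : Fin C, HasDerivAt (fun c : ℝ => (c * o k) * Real.exp (c * o k))
          (o k * Real.exp (c * o k) + (c * o k) * (Real.exp (c * o k) * o k)) c := by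
        intro k
        have h1 : HasDerivAt (fun c : ℝ => c * o k) (o k) c := by
          simpa using (hasDerivAt_id c).mul_const (o k)
        exact h1.mul h1.exp
      have h2 := HasDerivAt.fun_sum (fun k (_ : k ∈ Finset.univ) => hterm k)
      refine h2.congr_deriv ?_
      symm
      rw [Finset.mul_sum, ← Finset.sum_add_distrib]
      apply Finset.sum_congr rfl
      intro k _
      ring
    have hgd : ∀ c : ℝ, HasDerivAt
        (fun c => Real.log (∑ j, Real.exp (c * o j))
            - (∑ k, (c * o k) * Real.exp (c * o k)) / (∑ j, Real.exp (c * o j)))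
        (-(c * (((∑ k, o k ^ 2 * Real.exp (c * o k)) * (∑ j, Real.exp (c * o j))
            - (∑ k, o k * Real.exp (c * o k)) ^ 2) / (∑ j, Real.exp (c * o j)) ^ 2))) c := by
      intro c
      have h1 := (hSd c).log (hS c).ne'
      have h2 := (hNd c).div (hSd c) (hS c).ne'
      have h3 := h1.sub h2
      refine h3.congr_deriv ?_
      symm
      have hN : ∑ k, (c * o k) * Real.exp (c * o k) = c * ∑ k, o k * Real.exp (c * o k) := by
        rw [Finset.mul_sum]
        apply Finset.sum_congr rfl
        intro k _
        ring
      rw [hN]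
      field_simp
      ring
    have hvar : ∀ c : ℝ, (∑ k, o k * Real.exp (c * o k)) ^ 2
        < (∑ k, o k ^ 2 * Real.exp (c * o k)) * (∑ j, Real.exp (c * o j)) := by
      intro c
      have hid : 2 * ((∑ k, o k ^ 2 * Real.exp (c * o k)) * (∑ j, Real.exp (c * o j))
          - (∑ k, o k * Real.exp (c * o k)) ^ 2)
          = ∑ k, ∑ j, (o k - o j) ^ 2 * (Real.exp (c * o k) * Real.exp (c * o j)) := by
        have expand : ∀ k j : Fin C,
            (o k - o j) ^ 2 * (Real.exp (c * o k) * Real.exp (c * o j))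
            = o k ^ 2 * Real.exp (c * o k) * Real.exp (c * o j)
              + o j ^ 2 * Real.exp (c * o j) * Real.exp (c * o k)
              - o k * Real.exp (c * o k) * (o j * Real.exp (c * o j))
              - o j * Real.exp (c * o j) * (o k * Real.exp (c * o k)) := by
          intro k j; ring
        rw [sq, Finset.sum_mul_sum, Finset.sum_mul_sum]
        simp only [expand, Finset.sum_sub_distrib, Finset.sum_add_distrib]
        have hsymm : (∑ k, ∑ j, o j ^ 2 * Real.exp (c * o j) * Real.exp (c * o k))
            = ∑ k, ∑ j, o k ^ 2 * Real.exp (c * o k) * Real.exp (c * o j) :=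
          Finset.sum_comm
        have hsymm2 : (∑ k, ∑ j, o j * Real.exp (c * o j) * (o k * Real.exp (c * o k)))
            = ∑ k, ∑ j, o k * Real.exp (c * o k) * (o j * Real.exp (c * o j)) :=
          Finset.sum_comm
        rw [hsymm, hsymm2]
        ring
      have hnn : ∀ k j : Fin C,
          0 ≤ (o k - o j) ^ 2 * (Real.exp (c * o k) * Real.exp (c * o j)) :=
        fun k j => mul_nonneg (sq_nonneg _)
          (le_of_lt (mul_pos (Real.exp_pos _) (Real.exp_pos _)))
      have hpos : 0 < ∑ k, ∑ j, (o k - o j) ^ 2 * (Real.exp (c * o k) * Real.exp (c * o j)) := by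
        apply Finset.sum_pos' (fun k _ => Finset.sum_nonneg fun j _ => hnn k j)
        refine ⟨i0, Finset.mem_univ _, Finset.sum_pos' (fun j _ => hnn i0 j)
          ⟨j0, Finset.mem_univ _, mul_pos ?_ (mul_pos (Real.exp_pos _) (Real.exp_pos _))⟩⟩
        have : o i0 - o j0 ≠ 0 := sub_ne_zero.mpr hij
        positivity
      linarith
    apply strictAntiOn_of_deriv_neg (convex_Ioi 0)
    · exact (continuous_iff_continuousAt.mpr fun c => (hgd c).continuousAt).continuousOn
    · intro c hc
      rw [interior_Ioi] at hc
      rw [(hgd c).deriv]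
      have h1 := hvar c
      have h2 := hS c
      have hcpos : (0:ℝ) < c := hc
      have hdp : 0 < ((∑ k, o k ^ 2 * Real.exp (c * o k)) * (∑ j, Real.exp (c * o j))
          - (∑ k, o k * Real.exp (c * o k)) ^ 2) / (∑ j, Real.exp (c * o j)) ^ 2 :=
        div_pos (by linarith) (pow_pos h2 2)
      exact neg_neg_of_pos (mul_pos hcpos hdp)
  · -- ordering preserved
    intro c hc k j
    have hcpos : (0:ℝ) < c := hc
    have hSp := hS c
    unfold softmaxC
    simp only [Pi.smul_apply, smul_eq_mul]
    rw [div_le_div_iff_of_pos_right hSp, Real.exp_le_exp]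
    exact mul_le_mul_iff_right₀ hcpos
end
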